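/- Let R be a finite commutative local principal ring of cardinality q^n with R/J(R) ≅ GF(q). Let a ∈ J(R)^l \ J(R)^{l+1} with a ≠ 0. Then the GL₂(R)-conjugacy orbit of the matrix M(a,0) (first row (a,0), second row zero) has exactly q^{2n−2l−1}(q+1) elements. -/

import Mathlib

open IsLocalRing

lemma add_card_eq_range_mul_ker {G H : Type*} [AddGroup G] [AddGroup H] (f : G →+ H) :
    Nat.card G = Nat.card f.range * Nat.card f.ker := by
  rw [AddSubgroup.card_eq_card_quotient_mul_card_addSubgroup f.ker,
    Nat.card_congr (QuotientAddGroup.quotientKerEquivRange f).toEquiv]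

lemma ring_facts (R : Type*) [CommRing R] [Finite R] [IsLocalRing R]
    [IsPrincipalIdealRing R] (q n l : ℕ)
    (hcard : Nat.card R = q ^ n)
    (hres : Nat.card (R ⧸ maximalIdeal R) = q)
    (a : R) (ha : a ≠ 0)
    (hal : a ∈ (maximalIdeal R) ^ l ∧ a ∉ (maximalIdeal R) ^ (l + 1)) :
    2 ≤ q ∧ l + 1 ≤ n ∧
    Nat.card ↥(maximalIdeal R) = q ^ (n - 1) ∧
    Nat.card {x : R | a * x = 0} = q ^ l ∧
    {x : R | a * x = 0} ⊆ (maximalIdeal R : Set R) := by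
  classical
  set m := maximalIdeal R with hm
  -- q ≥ 2
  have hfinq : Finite (R ⧸ m) := Quotient.finite _
  have hq : 2 ≤ q := hres ▸ Finite.one_lt_card
  have hq0 : 0 < q := by omega
  -- generator
  obtain ⟨π, hπ⟩ : ∃ π : R, Ideal.span {π} = m :=
    ⟨_, Submodule.IsPrincipal.span_singleton_generator m⟩
  have hπm : π ∈ m := hπ ▸ Ideal.mem_span_singleton_self π
  have mpow : ∀ i : ℕ, m ^ i = Ideal.span {π ^ i} := fun i => by
    rw [← hπ, Ideal.span_singleton_pow]
  have mem_mpow : ∀ (x : R) (i : ℕ), x ∈ m ^ i ↔ ∃ c, c * π ^ i = x := fun x i => by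
    rw [mpow i, Ideal.mem_span_singleton']
  -- units
  have unit_of_not_mem : ∀ x : R, x ∉ m → IsUnit x := by
    intro x hx
    by_contra h
    exact hx h
  -- nilpotency
  obtain ⟨N, hN⟩ : IsNilpotent m := by
    have := IsArtinianRing.isNilpotent_jacobson_bot (R := R)
    rwa [IsLocalRing.jacobson_eq_maximalIdeal ⊥ bot_ne_top] at this
  have hex : ∃ i, m ^ i = ⊥ := ⟨N, hN⟩
  set e := Nat.find hex with he_def
  have he : m ^ e = ⊥ := Nat.find_spec hex
  have hmin : ∀ i, i < e → m ^ i ≠ ⊥ := fun i hi => Nat.find_min hex hi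
  -- unit decomposition in layers
  have layer : ∀ (x : R) (j : ℕ), x ∈ m ^ j → x ∉ m ^ (j + 1) → ∃ u, IsUnit u ∧ u * π ^ j = x := by
    intro x j h1 h2
    obtain ⟨c, hc⟩ := (mem_mpow x j).mp h1
    refine ⟨c, unit_of_not_mem c fun hcm => h2 ?_, hc⟩
    obtain ⟨d, hd⟩ := (mem_mpow c 1).mp (by simpa using hcm)
    refine (mem_mpow x (j + 1)).mpr ⟨d, ?_⟩
    rw [← hc, ← hd]; ring
  -- cardinality of m
  have hcm : Nat.card ↥m * q = q ^ n := by
    have := Submodule.card_eq_card_quotient_mul_card (M := R) m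
    rw [hcard, hres] at this
    omega
  have hn1 : 1 ≤ n := by
    rcases Nat.eq_zero_or_pos n with h | h
    · exfalso
      have : Nat.card ↥m ≥ 1 := Nat.card_pos
      rw [h, pow_zero] at hcm
      nlinarith
    · exact h
  -- chain step
  have chain : ∀ i, m ^ i ≠ ⊥ → Nat.card ↥(m ^ (i + 1)) * q = Nat.card ↥(m ^ i) := by
    intro i hne
    have hπi : π ^ i ≠ 0 := by
      intro h
      apply hne
      rw [mpow i, h, Ideal.span_singleton_eq_bot.mpr rfl]
    set f : R →+ R := AddMonoidHom.mulRight (π ^ i) with hf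
    set g : ↥m →+ R := f.comp (m.subtype.toAddMonoidHom) with hg
    -- ranges
    have hfr : (f.range : Set R) = ((m ^ i : Ideal R) : Set R) := by
      ext x
      simp only [AddMonoidHom.coe_range, Set.mem_range, SetLike.mem_coe, mem_mpow x i]
      constructor
      · rintro ⟨c, rfl⟩; exact ⟨c, rfl⟩
      · rintro ⟨c, rfl⟩; exact ⟨c, rfl⟩
    have hgr : (g.range : Set R) = ((m ^ (i + 1) : Ideal R) : Set R) := by
      ext x
      simp only [AddMonoidHom.coe_range, Set.mem_range, SetLike.mem_coe, mem_mpow x (i+1)]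
      constructor
      · rintro ⟨⟨y, hy⟩, rfl⟩
        obtain ⟨c, hc⟩ := (mem_mpow y 1).mp (by simpa using hy)
        exact ⟨c, by simp [hg, hf, ← hc]; ring⟩
      · rintro ⟨c, rfl⟩
        refine ⟨⟨c * π, ?_⟩, ?_⟩
        · exact Ideal.mul_mem_left m c hπm
        · simp [hg, hf]; ring
    -- kernels
    have hker_sub : ∀ x : R, x * π ^ i = 0 → x ∈ m := by
      intro x hx
      by_contra hxm
      obtain ⟨u, hu⟩ := (unit_of_not_mem x hxm)
      apply hπi
      calc π ^ i = (↑u⁻¹ * x) * π ^ i := by rw [← hu]; simp [Units.inv_mul_cancel_left]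
      _ = ↑u⁻¹ * (x * π ^ i) := by ring
      _ = 0 := by rw [hx, mul_zero]
    have hkereq : Nat.card g.ker = Nat.card f.ker := by
      apply Nat.card_congr
      refine ⟨fun x => ⟨(x : ↥m), ?_⟩, fun x => ⟨⟨(x : R), hker_sub x x.2⟩, ?_⟩, ?_, ?_⟩
      · exact x.2
      · exact x.2
      · intro x; ext; rfl
      · intro x; ext; rfl
    have h1 : Nat.card R = Nat.card ↥(m ^ i) * Nat.card f.ker := by
      rw [add_card_eq_range_mul_ker f]
      congr 1
      exact Nat.card_congr (Equiv.setCongr hfr)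
    have h2 : Nat.card ↥m = Nat.card ↥(m ^ (i + 1)) * Nat.card f.ker := by
      rw [add_card_eq_range_mul_ker g, hkereq]
      congr 1
      exact Nat.card_congr (Equiv.setCongr hgr)
    have hkpos : 0 < Nat.card f.ker := Nat.card_pos
    have h3 : Nat.card ↥(m ^ (i + 1)) * Nat.card f.ker * q = q ^ n := by rw [← h2]; exact hcm
    have h4 : Nat.card ↥(m ^ i) * Nat.card f.ker = q ^ n := by rw [← h1, hcard]
    apply Nat.eq_of_mul_eq_mul_right hkpos
    calc Nat.card ↥(m ^ (i + 1)) * q * Nat.card f.ker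
        = Nat.card ↥(m ^ (i + 1)) * Nat.card f.ker * q := by ring
      _ = q ^ n := h3
      _ = Nat.card ↥(m ^ i) * Nat.card f.ker := h4.symm
  -- powers
  have hpow : ∀ i, i ≤ e → Nat.card ↥(m ^ i) * q ^ i = q ^ n := by
    intro i
    induction i with
    | zero =>
      intro _
      have : Nat.card ↥(m ^ 0 : Ideal R) = Nat.card R := by
        apply Nat.card_congr
        refine Equiv.subtypeUnivEquiv ?_
        intro x; rw [pow_zero, Ideal.one_eq_top]; trivial
      rw [this, hcard, pow_zero, mul_one]
    | succ i ih =>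
      intro hie
      have h1 : m ^ i ≠ ⊥ := hmin i (by omega)
      calc Nat.card ↥(m ^ (i + 1)) * q ^ (i + 1)
          = Nat.card ↥(m ^ (i + 1)) * q * q ^ i := by ring
        _ = Nat.card ↥(m ^ i) * q ^ i := by rw [chain i h1]
        _ = q ^ n := ih (by omega)
  have hcard_bot : Nat.card ↥(⊥ : Ideal R) = 1 := by
    rw [Nat.card_eq_one_iff_unique]
    exact ⟨inferInstance, inferInstance⟩
  have hen : e = n := by
    have := hpow e le_rfl
    rw [he, hcard_bot, one_mul] at this
    exact Nat.pow_right_injective hq this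
  -- card of m ^ i for i ≤ n
  have hcardpow : ∀ i, i ≤ n → Nat.card ↥(m ^ i) = q ^ (n - i) := by
    intro i hi
    have := hpow i (by omega)
    have h2 : q ^ n = q ^ (n - i) * q ^ i := by
      rw [← pow_add]; congr 1; omega
    rw [h2] at this
    exact Nat.eq_of_mul_eq_mul_right (pow_pos hq0 i) this
  -- l < n
  have hln : l + 1 ≤ n := by
    by_contra h
    have : m ^ l = ⊥ := by
      have : m ^ e ≤ m ^ e := le_rfl
      have hle : m ^ l ≤ m ^ e := Ideal.pow_le_pow_right (by omega)
      rw [he] at hle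
      exact le_bot_iff.mp hle
    exact ha (by simpa [this] using hal.1)
  -- decompose a
  obtain ⟨u, hu, hua⟩ := layer a l hal.1 hal.2
  have hbot : m ^ n = ⊥ := by rw [← hen]; exact he
  have hπn : π ^ n = 0 := by
    have h6 : π ^ n ∈ m ^ n := by rw [mpow]; exact Ideal.mem_span_singleton_self _
    rwa [hbot, Ideal.mem_bot] at h6
  -- annihilator
  have hann : {x : R | a * x = 0} = ((m ^ (n - l) : Ideal R) : Set R) := by
    ext x
    simp only [Set.mem_setOf_eq, SetLike.mem_coe]
    constructor
    · intro hx
      rcases eq_or_ne x 0 with rfl | hx0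
      · exact Ideal.zero_mem _
      -- find the layer of x
      have hxex : ∃ j, x ∉ m ^ j := by
        refine ⟨n, fun hmem => hx0 ?_⟩
        rw [← hen, he, Ideal.mem_bot] at hmem
        exact hmem
      set j0 := Nat.find hxex with hj0
      have hj0spec : x ∉ m ^ j0 := Nat.find_spec hxex
      have hj0pos : 1 ≤ j0 := by
        rcases Nat.eq_zero_or_pos j0 with h | h
        · exfalso; apply hj0spec; rw [h, pow_zero, Ideal.one_eq_top]; trivial
        · exact h
      have hjin : x ∈ m ^ (j0 - 1) := by
        by_contra hc
        exact Nat.find_min hxex (by omega) hc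
      obtain ⟨w, hw, hwx⟩ := layer x (j0 - 1) hjin (by rwa [Nat.sub_add_cancel hj0pos])
      have h5 : (u * w) * π ^ (l + (j0 - 1)) = 0 := by
        rw [pow_add]
        calc u * w * (π ^ l * π ^ (j0 - 1)) = (u * π ^ l) * (w * π ^ (j0 - 1)) := by ring
          _ = a * x := by rw [hua, hwx]
          _ = 0 := hx
      obtain ⟨v, hv⟩ := hu.mul hw
      have hzero : π ^ (l + (j0 - 1)) = 0 := by
        calc π ^ (l + (j0 - 1)) = ↑v⁻¹ * (↑v * π ^ (l + (j0 - 1))) := by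
              rw [← mul_assoc, Units.inv_mul, one_mul]
          _ = ↑v⁻¹ * ((u * w) * π ^ (l + (j0 - 1))) := by rw [hv]
          _ = 0 := by rw [h5, mul_zero]
      have hge : n ≤ l + (j0 - 1) := by
        by_contra hlt
        refine hmin (l + (j0 - 1)) (by omega) ?_
        rw [mpow, hzero]
        exact Ideal.span_singleton_eq_bot.mpr rfl
      exact Ideal.pow_le_pow_right (by omega) hjin
    · intro hx
      obtain ⟨c, hc⟩ := (mem_mpow x (n - l)).mp hx
      rw [← hua, ← hc]
      calc u * π ^ l * (c * π ^ (n - l)) = u * c * π ^ (l + (n - l)) := by rw [pow_add]; ring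
        _ = 0 := by
          have : l + (n - l) = n := by omega
          rw [this, hπn, mul_zero]
  refine ⟨hq, hln, ?_, ?_, ?_⟩
  · have := hcardpow 1 (by omega)
    simpa using this
  · have h1 : Nat.card {x : R | a * x = 0} = Nat.card ↥(m ^ (n - l)) := by
      apply Nat.card_congr
      exact Equiv.setCongr hann
    rw [h1, hcardpow (n - l) (by omega)]
    congr 1
    omega
  · rw [hann]
    intro x hx
    have hle : m ^ (n - l) ≤ m ^ 1 := Ideal.pow_le_pow_right (by omega)
    simpa using hle hx

noncomputable def unitsEquivIsUnitSub (R : Type*) [CommMonoid R] : Rˣ ≃ {x : R // IsUnit x} where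
  toFun u := ⟨u.val, u.isUnit⟩
  invFun x := x.2.unit
  left_inv u := Units.ext u.isUnit.unit_spec
  right_inv x := Subtype.ext x.2.unit_spec

lemma card_units_eq (R : Type*) [CommRing R] [Finite R] [IsLocalRing R] (q n : ℕ)
    (hcard : Nat.card R = q ^ n)
    (hm : Nat.card ↥(maximalIdeal R) = q ^ (n - 1)) :
    Nat.card Rˣ = q ^ n - q ^ (n - 1) := by
  have h1 : Nat.card Rˣ = Nat.card {x : R // IsUnit x} :=
    Nat.card_congr (unitsEquivIsUnitSub R)
  have h2 : {x : R | IsUnit x} = ((maximalIdeal R : Set R))ᶜ := by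
    ext x
    simp only [Set.mem_setOf_eq, Set.mem_compl_iff, SetLike.mem_coe]
    constructor
    · intro hx hxm
      exact hxm hx
    · intro hx
      by_contra h
      exact hx h
  have h3 := Set.ncard_add_ncard_compl (maximalIdeal R : Set R)
  rw [hcard] at h3
  have h4 : (maximalIdeal R : Set R).ncard = q ^ (n - 1) := by
    rw [← Nat.card_coe_set_eq]
    exact hm
  have h5 : Nat.card {x : R // IsUnit x} = ((maximalIdeal R : Set R))ᶜ.ncard := by
    rw [← Nat.card_coe_set_eq]
    exact Nat.card_congr (Equiv.setCongr h2)
  omega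

lemma card_eq_range_mul_ker' {G H : Type*} [Group G] [Group H] (f : G →* H) :
    Nat.card G = Nat.card f.range * Nat.card f.ker := by
  rw [Subgroup.card_eq_card_quotient_mul_card_subgroup f.ker,
    Nat.card_congr (QuotientGroup.quotientKerEquivRange f).toEquiv]

lemma card_GL2 (R : Type*) [CommRing R] [Finite R] [IsLocalRing R] (q n : ℕ)
    (hres : Nat.card (R ⧸ maximalIdeal R) = q)
    (hm : Nat.card ↥(maximalIdeal R) = q ^ (n - 1)) :
    Nat.card (Matrix (Fin 2) (Fin 2) R)ˣ = (q ^ 2 - 1) * (q ^ 2 - q) * (q ^ (n - 1)) ^ 4 := by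
  classical
  set m := maximalIdeal R with hmdef
  have : Finite (ResidueField R) := Quotient.finite _
  letI : Fintype (ResidueField R) := Fintype.ofFinite _
  set K := ResidueField R with hK
  set mk : R →+* K := residue R with hmk
  have hres : Nat.card K = q := hres
  have hmksurj : Function.Surjective mk := Ideal.Quotient.mk_surjective
  -- lift units
  have unit_of_mk : ∀ x : R, IsUnit (mk x) → IsUnit x := by
    intro x hx
    by_contra h
    have hxm : x ∈ m := h
    have h0 : mk x = 0 := (Ideal.Quotient.eq_zero_iff_mem).mpr hxm
    rw [h0] at hx
    exact hx.ne_zero rfl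
  set Φ : (Matrix (Fin 2) (Fin 2) R)ˣ →* (Matrix (Fin 2) (Fin 2) K)ˣ :=
    Units.map (mk.mapMatrix (m := Fin 2)).toMonoidHom with hΦ
  have hsurj : Function.Surjective Φ := by
    intro u
    obtain ⟨B, hB⟩ : ∃ B : Matrix (Fin 2) (Fin 2) R, B.map mk = (u : Matrix (Fin 2) (Fin 2) K) := by
      refine ⟨Matrix.of fun i j => Function.surjInv hmksurj ((u : Matrix (Fin 2) (Fin 2) K) i j), ?_⟩
      ext i j
      exact Function.surjInv_eq hmksurj _
    have hdet : IsUnit B.det := by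
      apply unit_of_mk
      have hd : mk B.det = ((u : Matrix (Fin 2) (Fin 2) K)).det := by
        rw [RingHom.map_det, RingHom.mapMatrix_apply, hB]
      rw [hd]
      exact (Matrix.isUnit_iff_isUnit_det _).mp u.isUnit
    have hBu : IsUnit B := (Matrix.isUnit_iff_isUnit_det _).mpr hdet
    refine ⟨hBu.unit, ?_⟩
    ext : 1
    show mk.mapMatrix (hBu.unit : Matrix (Fin 2) (Fin 2) R) = _
    rw [hBu.unit_spec, RingHom.mapMatrix_apply, hB]
  have hrange : Nat.card Φ.range = (q ^ 2 - 1) * (q ^ 2 - q) := by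
    have h1 : Nat.card Φ.range = Nat.card (Matrix (Fin 2) (Fin 2) K)ˣ := by
      apply Nat.card_congr
      apply Equiv.subtypeUnivEquiv
      intro u
      exact (MonoidHom.range_eq_top.mpr hsurj) ▸ Subgroup.mem_top u
    have h2 : Nat.card (Matrix (Fin 2) (Fin 2) K)ˣ = ∏ i : Fin 2, (Fintype.card K ^ 2 - Fintype.card K ^ (i : ℕ)) := by
      have h2' : Nat.card (Matrix (Fin 2) (Fin 2) K)ˣ = Nat.card (GL (Fin 2) K) := rfl
      rw [h2']
      exact Matrix.card_GL_field 2
    have hq : Fintype.card K = q := by rw [← Nat.card_eq_fintype_card, hres]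
    rw [h1, h2, hq, Fin.prod_univ_two]
    simp
  have hker : Nat.card Φ.ker = (q ^ (n - 1)) ^ 4 := by
    have hcong : Nat.card Φ.ker = Nat.card ((↥m × ↥m) × ↥m × ↥m) := by
      apply Nat.card_congr
      refine ⟨?_, ?_, ?_, ?_⟩
      · intro P
        have hP : ((P : (Matrix (Fin 2) (Fin 2) R)ˣ) : Matrix (Fin 2) (Fin 2) R).map mk = 1 := by
          have h9 := congrArg (Units.val) ((MonoidHom.mem_ker (f := Φ)).mp P.2)
          exact h9
        have entry : ∀ i j, mk ((P.1 : Matrix (Fin 2) (Fin 2) R) i j) = (1 : Matrix (Fin 2) (Fin 2) K) i j := by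
          intro i j
          rw [← hP]
          rfl
        refine ⟨⟨⟨(P.1 : Matrix (Fin 2) (Fin 2) R) 0 0 - 1, ?_⟩, ⟨(P.1 : Matrix (Fin 2) (Fin 2) R) 0 1, ?_⟩⟩,
          ⟨(P.1 : Matrix (Fin 2) (Fin 2) R) 1 0, ?_⟩, ⟨(P.1 : Matrix (Fin 2) (Fin 2) R) 1 1 - 1, ?_⟩⟩
        · rw [← Ideal.Quotient.eq_zero_iff_mem]
          show mk _ = 0
          rw [map_sub, entry 0 0]
          simp [Matrix.one_apply]
        · rw [← Ideal.Quotient.eq_zero_iff_mem]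
          show mk _ = 0
          rw [entry 0 1]
          simp [Matrix.one_apply]
        · rw [← Ideal.Quotient.eq_zero_iff_mem]
          show mk _ = 0
          rw [entry 1 0]
          simp [Matrix.one_apply]
        · rw [← Ideal.Quotient.eq_zero_iff_mem]
          show mk _ = 0
          rw [map_sub, entry 1 1]
          simp [Matrix.one_apply]
      · rintro ⟨⟨⟨x, hx⟩, ⟨b, hb⟩⟩, ⟨c, hc⟩, ⟨y, hy⟩⟩
        have hdet : IsUnit (!![1 + x, b; c, 1 + y] : Matrix (Fin 2) (Fin 2) R) := by
          rw [Matrix.isUnit_iff_isUnit_det, Matrix.det_fin_two_of]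
          apply unit_of_mk
          have h0 : (1 + x) * (1 + y) - b * c = 1 + (x + y + x * y - b * c) := by ring
          have hmem : x + y + x * y - b * c ∈ m := by
            apply Submodule.sub_mem
            · exact Submodule.add_mem _ (Submodule.add_mem _ hx hy) (Ideal.mul_mem_right _ _ hx)
            · exact Ideal.mul_mem_right _ _ hb
          have hz : mk (x + y + x * y - b * c) = 0 := (Ideal.Quotient.eq_zero_iff_mem).mpr hmem
          rw [h0, map_add, map_one, hz, add_zero]
          exact isUnit_one
        refine ⟨hdet.unit, ?_⟩
        rw [MonoidHom.mem_ker]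
        apply Units.ext
        show mk.mapMatrix (hdet.unit : Matrix (Fin 2) (Fin 2) R) = 1
        rw [hdet.unit_spec, RingHom.mapMatrix_apply]
        have hx0 : mk x = 0 := (Ideal.Quotient.eq_zero_iff_mem).mpr hx
        have hb0 : mk b = 0 := (Ideal.Quotient.eq_zero_iff_mem).mpr hb
        have hc0 : mk c = 0 := (Ideal.Quotient.eq_zero_iff_mem).mpr hc
        have hy0 : mk y = 0 := (Ideal.Quotient.eq_zero_iff_mem).mpr hy
        ext i j
        fin_cases i <;> fin_cases j <;>
          simp [Matrix.one_apply, hx0, hb0, hc0, hy0]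
      · intro P
        apply Subtype.ext
        apply Units.ext
        show _ = (P.1 : Matrix (Fin 2) (Fin 2) R)
        rw [IsUnit.unit_spec]
        ext i j
        fin_cases i <;> fin_cases j <;> simp
      · rintro ⟨⟨⟨x, hx⟩, ⟨b, hb⟩⟩, ⟨c, hc⟩, ⟨y, hy⟩⟩
        refine Prod.ext (Prod.ext (Subtype.ext ?_) (Subtype.ext ?_)) (Prod.ext (Subtype.ext ?_) (Subtype.ext ?_)) <;>
          simp [IsUnit.unit_spec]
    rw [hcong]
    simp [Nat.card_prod, hm]
    ring
  rw [card_eq_range_mul_ker' Φ, hrange, hker]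


lemma card_stab (R : Type*) [CommRing R] [Finite R] [IsLocalRing R] (a : R)
    (hsub : {x : R | a * x = 0} ⊆ (maximalIdeal R : Set R)) :
    Nat.card (MulAction.stabilizer (ConjAct (Matrix (Fin 2) (Fin 2) R)ˣ) !![a, 0; 0, 0]) =
      Nat.card Rˣ * Nat.card Rˣ * Nat.card {x : R | a * x = 0} * Nat.card {x : R | a * x = 0} := by
  classical
  set m := maximalIdeal R with hmdef
  set A : Matrix (Fin 2) (Fin 2) R := !![a, 0; 0, 0] with hA
  set G := (Matrix (Fin 2) (Fin 2) R)ˣ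
  have unit_of_not_mem : ∀ x : R, x ∉ m → IsUnit x := by
    intro x hx; by_contra h; exact hx h
  -- stabilizer membership in terms of commutation
  have hmem : ∀ P : ConjAct G, P ∈ MulAction.stabilizer (ConjAct G) A ↔
      ((ConjAct.ofConjAct P : G) : Matrix (Fin 2) (Fin 2) R) * A
        = A * ((ConjAct.ofConjAct P : G) : Matrix (Fin 2) (Fin 2) R) := by
    intro P
    rw [MulAction.mem_stabilizer_iff, ConjAct.units_smul_def]
    set u := ConjAct.ofConjAct P
    constructor
    · intro h
      calc (u : Matrix (Fin 2) (Fin 2) R) * A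
          = (u : Matrix (Fin 2) (Fin 2) R) * A * ↑u⁻¹ * ↑u := (Units.inv_mul_cancel_right _ _).symm
        _ = A * ↑u := by rw [h]
    · intro h
      rw [h]
      exact Units.mul_inv_cancel_right _ _
  -- commutation in terms of entries
  have hcomm : ∀ Q : Matrix (Fin 2) (Fin 2) R, Q * A = A * Q ↔ (a * (Q 0 1) = 0 ∧ a * (Q 1 0) = 0) := by
    intro Q
    constructor
    · intro h
      have h01 := congrFun (congrFun h 0) 1
      have h10 := congrFun (congrFun h 1) 0
      simp [hA, Matrix.mul_apply, Fin.sum_univ_two] at h01 h10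
      refine ⟨?_, ?_⟩
      · rw [← h01]
      · rw [mul_comm]; exact h10
    · rintro ⟨h1, h2⟩
      have h2' : Q 1 0 * a = 0 := by rw [mul_comm]; exact h2
      ext i j
      fin_cases i <;> fin_cases j <;>
        simp [hA, Matrix.mul_apply, Fin.sum_univ_two, h1, h2', mul_comm a]
  have key : Nat.card (MulAction.stabilizer (ConjAct G) A) =
      Nat.card ({x : R // IsUnit x} × {x : R // IsUnit x} ×
        {x : R | a * x = 0} × {x : R | a * x = 0}) := by
    apply Nat.card_congr
    refine ⟨?_, ?_, ?_, ?_⟩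
    · intro P
      have hPA := (hcomm _).mp ((hmem P.1).mp P.2)
      set Q := ((ConjAct.ofConjAct (P.1 : ConjAct G) : G) : Matrix (Fin 2) (Fin 2) R) with hQ
      have hdet : IsUnit Q.det :=
        (Matrix.isUnit_iff_isUnit_det _).mp (ConjAct.ofConjAct P.1).isUnit
      have hb : Q 0 1 ∈ m := hsub hPA.1
      have hc : Q 1 0 ∈ m := hsub hPA.2
      have hQd : IsUnit (Q 0 0 * Q 1 1) := by
        apply unit_of_not_mem
        intro hmm
        have hdm : Q.det ∈ m := by
          rw [Matrix.det_fin_two]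
          exact Submodule.sub_mem _ hmm (Ideal.mul_mem_right _ _ hb)
        exact hdm hdet
      exact ⟨⟨Q 0 0, isUnit_of_mul_isUnit_left hQd⟩,
        ⟨Q 1 1, isUnit_of_mul_isUnit_right hQd⟩, ⟨Q 0 1, hPA.1⟩, ⟨Q 1 0, hPA.2⟩⟩
    · rintro ⟨⟨p, hp⟩, ⟨d, hd⟩, ⟨b, hb⟩, ⟨c, hc⟩⟩
      have hu : IsUnit (!![p, b; c, d] : Matrix (Fin 2) (Fin 2) R) := by
        rw [Matrix.isUnit_iff_isUnit_det, Matrix.det_fin_two_of]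
        apply unit_of_not_mem
        intro hmm
        have hbc : b * c ∈ m := Ideal.mul_mem_right _ _ (hsub hb)
        have hpd : p * d ∈ m := by
          have h9 := Submodule.add_mem _ hmm hbc
          simpa using h9
        exact hpd (hp.mul hd)
      refine ⟨ConjAct.toConjAct hu.unit, ?_⟩
      rw [hmem, ConjAct.ofConjAct_toConjAct, hu.unit_spec]
      apply (hcomm _).mpr
      constructor
      · simpa using hb
      · simpa using hc
    · intro P
      apply Subtype.ext
      apply ConjAct.ofConjAct.injective
      rw [ConjAct.ofConjAct_toConjAct]
      apply Units.ext
      rw [IsUnit.unit_spec]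
      exact (Matrix.eta_fin_two _).symm
    · rintro ⟨⟨p, hp⟩, ⟨d, hd⟩, ⟨b, hb⟩, ⟨c, hc⟩⟩
      refine Prod.ext (Subtype.ext ?_) (Prod.ext (Subtype.ext ?_)
        (Prod.ext (Subtype.ext ?_) (Subtype.ext ?_))) <;>
        simp [ConjAct.ofConjAct_toConjAct, IsUnit.unit_spec]
  rw [key, Nat.card_prod, Nat.card_prod, Nat.card_prod]
  have hcu : Nat.card {x : R // IsUnit x} = Nat.card Rˣ :=
    (Nat.card_congr (unitsEquivIsUnitSub R)).symm
  rw [hcu]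
  ring

/-- Orbit size of `M(a,0)` under `GL₂(R)`-conjugation, where `a ∈ J(R)^l \ J(R)^(l+1)`,
`a ≠ 0`, over a finite commutative local principal ring of cardinality `q ^ n` with
residue field of cardinality `q`: the orbit has `q ^ (2n - 2l - 1) * (q + 1)` elements. -/
theorem orbit_card_Ma0 (R : Type*) [CommRing R] [Finite R] [IsLocalRing R]
    [IsPrincipalIdealRing R] (q n l : ℕ)
    (hcard : Nat.card R = q ^ n)
    (hres : Nat.card (R ⧸ IsLocalRing.maximalIdeal R) = q)
    (a : R) (ha : a ≠ 0)
    (hal : a ∈ (IsLocalRing.maximalIdeal R) ^ l ∧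
      a ∉ (IsLocalRing.maximalIdeal R) ^ (l + 1)) :
    Set.ncard {B : Matrix (Fin 2) (Fin 2) R | ∃ P : (Matrix (Fin 2) (Fin 2) R)ˣ,
        B = (P : Matrix (Fin 2) (Fin 2) R) * !![a, 0; 0, 0] *
          ((P⁻¹ : _) : Matrix (Fin 2) (Fin 2) R)} =
      q ^ (2 * n - 2 * l - 1) * (q + 1) := by
  classical
  obtain ⟨hq, hln, hmcard, hanncard, hannsub⟩ := ring_facts R q n l hcard hres a ha hal
  set A : Matrix (Fin 2) (Fin 2) R := !![a, 0; 0, 0] with hA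
  set G := (Matrix (Fin 2) (Fin 2) R)ˣ with hG
  -- orbit set equality
  have horb : {B : Matrix (Fin 2) (Fin 2) R | ∃ P : G,
      B = (P : Matrix (Fin 2) (Fin 2) R) * A * ((P⁻¹ : G) : Matrix (Fin 2) (Fin 2) R)}
      = MulAction.orbit (ConjAct G) A := by
    ext B
    simp only [Set.mem_setOf_eq, MulAction.mem_orbit_iff]
    constructor
    · rintro ⟨P, rfl⟩
      exact ⟨ConjAct.toConjAct P, by
        rw [ConjAct.units_smul_def, ConjAct.ofConjAct_toConjAct]⟩
    · rintro ⟨g, rfl⟩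
      exact ⟨ConjAct.ofConjAct g, by rw [ConjAct.units_smul_def]⟩
  have hval : Set.ncard {B : Matrix (Fin 2) (Fin 2) R | ∃ P : G,
      B = (P : Matrix (Fin 2) (Fin 2) R) * A * ((P⁻¹ : G) : Matrix (Fin 2) (Fin 2) R)}
      = Nat.card ↥(MulAction.orbit (ConjAct G) A) := by
    rw [horb, Nat.card_coe_set_eq]
  -- orbit-stabilizer
  have hOS : Nat.card ↥(MulAction.orbit (ConjAct G) A)
      * Nat.card (MulAction.stabilizer (ConjAct G) A) = Nat.card (ConjAct G) := by
    rw [← Nat.card_prod]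
    exact Nat.card_congr (MulAction.orbitProdStabilizerEquivGroup (ConjAct G) A)
  have hCG : Nat.card (ConjAct G) = Nat.card G := rfl
  have hGL : Nat.card G = (q ^ 2 - 1) * (q ^ 2 - q) * (q ^ (n - 1)) ^ 4 :=
    card_GL2 R q n hres hmcard
  have hstab : Nat.card (MulAction.stabilizer (ConjAct G) A) =
      (q ^ n - q ^ (n - 1)) * (q ^ n - q ^ (n - 1)) * q ^ l * q ^ l := by
    rw [card_stab R a hannsub, card_units_eq R q n hcard hmcard, hanncard]
  -- put together
  rw [hval]
  have hSpos : 0 < (q ^ n - q ^ (n - 1)) * (q ^ n - q ^ (n - 1)) * q ^ l * q ^ l := by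
    have h1 : q ^ (n - 1) < q ^ n := by
      apply Nat.pow_lt_pow_right (by omega)
      omega
    have h2 : 0 < q ^ l := pow_pos (by omega) l
    have h3 : 0 < q ^ n - q ^ (n - 1) := by omega
    positivity
  apply Nat.eq_of_mul_eq_mul_right hSpos
  rw [← hstab, hOS, hCG, hGL, hstab]
  -- pure arithmetic
  obtain ⟨k, rfl⟩ : ∃ k, n = l + 1 + k := ⟨n - l - 1, by omega⟩
  have e1 : 2 * (l + 1 + k) - 2 * l - 1 = 2 * k + 1 := by omega
  have e2 : l + 1 + k - 1 = l + k := by omega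
  rw [e1, e2]
  have le1 : (1 : ℕ) ≤ q ^ 2 := Nat.one_le_pow _ _ (by omega)
  have le2 : q ≤ q ^ 2 := by nlinarith
  have le3 : q ^ (l + k) ≤ q ^ (l + 1 + k) := Nat.pow_le_pow_right (by omega) (by omega)
  zify [le1, le2, le3]
  ring
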